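/- Let A ∈ Z^{d×n}, c ∈ R^n with Q_c = {y : yA ≤ c} nonempty, and suppose A is a Hilbert basis. If there exists a finite test-set T for the family of integer programs IP_{A,c} such that every t ∈ T has all positive entries equal to 1 (i.e. t^+ is a 0-1 vector), then yA ≤ c is TDI: for every b ∈ cone(A) ∩ Z^d the optimal values of the linear program min{c·x : Ax = b, x ≥ 0} and the integer program min{c·x : Ax = b, x ∈ N^n} coincide. -/

import Mathlib

def feas {d n : ℕ} (A : Matrix (Fin d) (Fin n) ℤ) (b : Fin d → ℝ) (x : Fin n → ℝ) : Prop :=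
  (∀ j, 0 ≤ x j) ∧ ∀ i, ∑ j, (A i j : ℝ) * x j = b i

/-- u is a feasible but non-optimal solution of the integer program IP_{A,c}(Au). -/
def intNonOpt {d n : ℕ} (A : Matrix (Fin d) (Fin n) ℤ) (c : Fin n → ℝ) (u : Fin n → ℕ) : Prop :=
  ∃ u' : Fin n → ℕ, (∀ i, ∑ j, A i j * (u' j : ℤ) = ∑ j, A i j * (u j : ℤ)) ∧
    ∑ j, c j * (u' j : ℝ) < ∑ j, c j * (u j : ℝ)

lemma lb_lemma {d n : ℕ} (A : Matrix (Fin d) (Fin n) ℤ) (c : Fin n → ℝ) (y : Fin d → ℝ)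
    (hy : ∀ j, ∑ i, y i * (A i j : ℝ) ≤ c j) (b : Fin d → ℝ) (x : Fin n → ℝ)
    (hx : feas A b x) : ∑ i, y i * b i ≤ ∑ j, c j * x j := by
  have h1 : ∑ i, y i * b i = ∑ j, (∑ i, y i * (A i j : ℝ)) * x j := by
    simp only [← hx.2, Finset.mul_sum, Finset.sum_mul]
    rw [Finset.sum_comm]
    congr 1; ext i; congr 1; ext j; ring
  rw [h1]
  apply Finset.sum_le_sum
  intro j _
  exact mul_le_mul_of_nonneg_right (hy j) (hx.1 j)


lemma descend {d n : ℕ} (A : Matrix (Fin d) (Fin n) ℤ) (b : Fin d → ℝ) (c : Fin n → ℝ)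
    (x v : Fin n → ℝ) (hx : feas A b x)
    (hv0 : ∀ i, ∑ j, (A i j : ℝ) * v j = 0) (hsupp : ∀ j, x j = 0 → v j = 0)
    (hc : ∑ j, c j * v j ≤ 0) (hneg : ∃ j, v j < 0) :
    ∃ x', feas A b x' ∧ ∑ j, c j * x' j ≤ ∑ j, c j * x j ∧
      (Finset.univ.filter (fun j => x' j ≠ 0)) ⊂ (Finset.univ.filter (fun j => x j ≠ 0)) := by
  classical
  set F := Finset.univ.filter (fun j => v j < 0) with hF
  have hFne : F.Nonempty := by
    obtain ⟨j, hj⟩ := hneg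
    exact ⟨j, by simp [hF, hj]⟩
  set τ := F.inf' hFne (fun j => x j / (-v j)) with hτ
  have hmemF : ∀ j ∈ F, v j < 0 := by intro j hj; simpa [hF] using hj
  have hτ0 : 0 ≤ τ := by
    apply Finset.le_inf'
    intro j hj
    exact div_nonneg (hx.1 j) (by have := hmemF j hj; linarith)
  obtain ⟨j₀, hj₀F, hj₀⟩ := Finset.exists_mem_eq_inf' hFne (fun j => x j / (-v j))
  set x' : Fin n → ℝ := fun j => x j + τ * v j with hx'
  have hnn : ∀ j, 0 ≤ x' j := by
    intro j
    by_cases h : v j < 0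
    · have hjF : j ∈ F := by simp [hF, h]
      have h1 : τ ≤ x j / (-v j) := Finset.inf'_le _ hjF
      have h2 : τ * (-v j) ≤ x j := by
        rw [← le_div_iff₀ (by linarith : (0:ℝ) < -v j)]; exact h1
      simp only [hx']; nlinarith
    · push_neg at h
      exact add_nonneg (hx.1 j) (mul_nonneg hτ0 (by linarith))
  have hfeas : feas A b x' := by
    refine ⟨hnn, fun i => ?_⟩
    have : ∑ j, (A i j : ℝ) * x' j
        = (∑ j, (A i j : ℝ) * x j) + τ * ∑ j, (A i j : ℝ) * v j := by
      rw [Finset.mul_sum, ← Finset.sum_add_distrib]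
      congr 1; ext j; simp only [hx']; ring
    rw [this, hv0 i, hx.2 i]; ring
  have hcost : ∑ j, c j * x' j ≤ ∑ j, c j * x j := by
    have : ∑ j, c j * x' j = (∑ j, c j * x j) + τ * ∑ j, c j * v j := by
      rw [Finset.mul_sum, ← Finset.sum_add_distrib]
      congr 1; ext j; simp only [hx']; ring
    rw [this]
    nlinarith [mul_nonpos_of_nonneg_of_nonpos hτ0 hc]
  have hsub : (Finset.univ.filter (fun j => x' j ≠ 0)) ⊆ (Finset.univ.filter (fun j => x j ≠ 0)) := by
    intro j hj
    simp only [Finset.mem_filter, Finset.mem_univ, true_and] at hj ⊢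
    intro hxj
    exact hj (by simp [hx', hxj, hsupp j hxj])
  refine ⟨x', hfeas, hcost, (Finset.ssubset_iff_of_subset hsub).2 ⟨j₀, ?_, ?_⟩⟩
  · simp only [Finset.mem_filter, Finset.mem_univ, true_and]
    intro hxj
    have := hmemF j₀ hj₀F
    have := hsupp j₀ hxj
    linarith
  · simp only [Finset.mem_filter, Finset.mem_univ, true_and, not_not]
    have hvj : v j₀ < 0 := hmemF j₀ hj₀F
    have : τ * v j₀ = -x j₀ := by
      rw [hτ, hj₀, div_neg, neg_mul, div_mul_cancel₀ _ (ne_of_lt hvj)]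
    simp [hx', this]


lemma unbounded_absurd {d n : ℕ} (A : Matrix (Fin d) (Fin n) ℤ) (b : Fin d → ℝ)
    (c : Fin n → ℝ) (y : Fin d → ℝ) (hy : ∀ j, ∑ i, y i * (A i j : ℝ) ≤ c j)
    (x w : Fin n → ℝ) (hx : feas A b x)
    (hw0 : ∀ i, ∑ j, (A i j : ℝ) * w j = 0) (hwnn : ∀ j, 0 ≤ w j)
    (hcw : ∑ j, c j * w j < 0) : False := by
  set t : ℝ := (∑ j, c j * x j - ∑ i, y i * b i + 1) / (-(∑ j, c j * w j)) with ht
  have hlb := lb_lemma A c y hy b x hx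
  have ht0 : 0 ≤ t := by
    apply div_nonneg (by linarith) (by linarith)
  have hfeas : feas A b (fun j => x j + t * w j) := by
    refine ⟨fun j => add_nonneg (hx.1 j) (mul_nonneg ht0 (hwnn j)), fun i => ?_⟩
    have : ∑ j, (A i j : ℝ) * (x j + t * w j)
        = (∑ j, (A i j : ℝ) * x j) + t * ∑ j, (A i j : ℝ) * w j := by
      rw [Finset.mul_sum, ← Finset.sum_add_distrib]
      congr 1; ext j; ring
    rw [this, hw0 i, hx.2 i]; ring
  have hlb2 := lb_lemma A c y hy b _ hfeas
  have hcost : ∑ j, c j * (x j + t * w j) = (∑ j, c j * x j) + t * ∑ j, c j * w j := by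
    rw [Finset.mul_sum, ← Finset.sum_add_distrib]
    congr 1; ext j; ring
  rw [hcost] at hlb2
  have htc : t * ∑ j, c j * w j = -(∑ j, c j * x j - ∑ i, y i * b i + 1) := by
    rw [ht, div_mul_eq_mul_div, div_eq_iff (by linarith : -(∑ j, c j * w j) ≠ 0)]
    ring
  rw [htc] at hlb2
  linarith

lemma reduce {d n : ℕ} (A : Matrix (Fin d) (Fin n) ℤ) (b : Fin d → ℝ) (c : Fin n → ℝ)
    (y : Fin d → ℝ) (hy : ∀ j, ∑ i, y i * (A i j : ℝ) ≤ c j) :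
    ∀ (k : ℕ) (x : Fin n → ℝ), feas A b x →
      (Finset.univ.filter (fun j => x j ≠ 0)).card ≤ k →
      ∃ x', feas A b x' ∧ ∑ j, c j * x' j ≤ ∑ j, c j * x j ∧
        LinearIndependent ℝ (fun j : {j : Fin n // x' j ≠ 0} => fun i : Fin d => (A i j.1 : ℝ)) := by
  classical
  intro k
  induction k with
  | zero =>
    intro x hx hcard
    refine ⟨x, hx, le_refl _, ?_⟩
    have hempty : IsEmpty {j : Fin n // x j ≠ 0} := by
      constructor
      rintro ⟨j, hj⟩
      have : j ∈ Finset.univ.filter (fun j => x j ≠ 0) := by simp [hj]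
      have h0 := Finset.card_eq_zero.1 (Nat.le_zero.1 hcard)
      rw [h0] at this
      exact absurd this (Finset.notMem_empty j)
    exact linearIndependent_empty_type
  | succ k ih =>
    intro x hx hcard
    by_cases hli : LinearIndependent ℝ (fun j : {j : Fin n // x j ≠ 0} => fun i : Fin d => (A i j.1 : ℝ))
    · exact ⟨x, hx, le_refl _, hli⟩
    obtain ⟨g, hg, j₁, hgj₁⟩ := Fintype.not_linearIndependent_iff.1 hli
    set w : Fin n → ℝ := fun j => if h : x j ≠ 0 then g ⟨j, h⟩ else 0 with hw
    have hsuppw : ∀ j, x j = 0 → w j = 0 := by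
      intro j hj; simp [hw, hj]
    have hw0 : ∀ i, ∑ j, (A i j : ℝ) * w j = 0 := by
      intro i
      have h1 := congrFun hg i
      rw [Finset.sum_apply] at h1
      have h2 : ∑ j : Fin n, (A i j : ℝ) * w j
          = ∑ j ∈ Finset.univ.filter (fun j => x j ≠ 0), (A i j : ℝ) * w j := by
        symm
        apply Finset.sum_filter_of_ne
        intro j _ hne hxj
        exact hne (by simp [hw, hxj])
      have hmem : ∀ j : Fin n, j ∈ Finset.univ.filter (fun j => x j ≠ 0) ↔ x j ≠ 0 := by
        intro j; simp
      rw [h2, Finset.sum_subtype _ hmem (fun j => (A i j : ℝ) * w j)]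
      simp only [Pi.smul_apply, smul_eq_mul, Pi.zero_apply] at h1
      have h3 : ∑ a : { j : Fin n // x j ≠ 0 }, (A i a.1 : ℝ) * w a.1
          = ∑ a : { j : Fin n // x j ≠ 0 }, g a * (A i a.1 : ℝ) := by
        apply Finset.sum_congr rfl
        rintro ⟨j, hj⟩ _
        simp only [hw]
        rw [dif_pos hj]
        ring
      rw [h3]
      exact h1
    have hcw_eq : ∑ j, c j * w j = ∑ j : {j : Fin n // x j ≠ 0}, c j.1 * g j := by
      have h2 : ∑ j : Fin n, c j * w j
          = ∑ j ∈ Finset.univ.filter (fun j => x j ≠ 0), c j * w j := by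
        symm
        apply Finset.sum_filter_of_ne
        intro j _ hne hxj
        exact hne (by simp [hw, hxj])
      have hmem : ∀ j : Fin n, j ∈ Finset.univ.filter (fun j => x j ≠ 0) ↔ x j ≠ 0 := by
        intro j; simp
      rw [h2, Finset.sum_subtype _ hmem (fun j => c j * w j)]
      apply Finset.sum_congr rfl
      rintro ⟨j, hj⟩ _
      simp only [hw]
      rw [dif_pos hj]
    have hwne : w j₁.1 ≠ 0 := by
      simp only [hw]
      rw [dif_pos j₁.2]
      simpa using hgj₁
    -- choose direction v ∈ {w, -w} with cost ≤ 0 and a negative entry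
    have hkey : ∀ v : Fin n → ℝ, (∀ i, ∑ j, (A i j : ℝ) * v j = 0) →
        (∀ j, x j = 0 → v j = 0) → (∑ j, c j * v j ≤ 0) → (∃ j, v j < 0) →
        ∃ x', feas A b x' ∧ ∑ j, c j * x' j ≤ ∑ j, c j * x j ∧
          LinearIndependent ℝ (fun j : {j : Fin n // x' j ≠ 0} => fun i : Fin d => (A i j.1 : ℝ)) := by
      intro v hv0 hvs hvc hvneg
      obtain ⟨x'', hf'', hc'', hss⟩ := descend A b c x v hx hv0 hvs hvc hvneg
      have hcard'' : (Finset.univ.filter (fun j => x'' j ≠ 0)).card ≤ k := by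
        have := Finset.card_lt_card hss
        omega
      obtain ⟨x', h1, h2, h3⟩ := ih x'' hf'' hcard''
      exact ⟨x', h1, le_trans h2 hc'', h3⟩
    have hnegw0 : ∀ i, ∑ j, (A i j : ℝ) * (-w j) = 0 := by
      intro i
      have h3 : ∑ j, (A i j : ℝ) * (-w j) = -∑ j, (A i j : ℝ) * w j := by
        simp [mul_neg]
      rw [h3, hw0 i, neg_zero]
    have hnegwc : ∑ j, c j * (-w j) = -∑ j, c j * w j := by
      simp [mul_neg]
    rcases lt_trichotomy (∑ j, c j * w j) 0 with hc0 | hc0 | hc0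
    · by_cases hneg : ∃ j, w j < 0
      · exact hkey w hw0 hsuppw (le_of_lt hc0) hneg
      · push_neg at hneg
        exact absurd (unbounded_absurd A b c y hy x w hx hw0 hneg hc0) id
    · rcases lt_or_gt_of_ne hwne with h | h
      · exact hkey w hw0 hsuppw (le_of_eq hc0) ⟨j₁.1, h⟩
      · refine hkey (fun j => -w j) hnegw0 (fun j hj => by show -w j = 0; rw [hsuppw j hj]; ring)
          (by show ∑ j, c j * (-w j) ≤ 0; rw [hnegwc, hc0]; norm_num)
          ⟨j₁.1, by show -w j₁.1 < 0; linarith⟩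
    · by_cases hneg : ∃ j, w j > 0
      · obtain ⟨j2, hj2⟩ := hneg
        exact hkey (fun j => -w j) hnegw0 (fun j hj => by show -w j = 0; rw [hsuppw j hj]; ring)
          (by show ∑ j, c j * (-w j) ≤ 0; rw [hnegwc]; linarith)
          ⟨j2, by show -w j2 < 0; linarith⟩
      · push_neg at hneg
        refine absurd (unbounded_absurd A b c y hy x (fun j => -w j) hx hnegw0
          (fun j => by show (0:ℝ) ≤ -w j; have := hneg j; linarith)
          (by show ∑ j, c j * (-w j) < 0; rw [hnegwc]; linarith)) id


lemma rational_of_indep {d n : ℕ} (A : Matrix (Fin d) (Fin n) ℤ) (b : Fin d → ℤ)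
    (x : Fin n → ℝ) (hx : feas A (fun i => (b i : ℝ)) x)
    (hli : LinearIndependent ℝ (fun j : {j : Fin n // x j ≠ 0} => fun i : Fin d => (A i j.1 : ℝ))) :
    ∃ q : Fin n → ℚ, ∀ j, x j = (q j : ℝ) := by
  classical
  set S := {j : Fin n // x j ≠ 0}
  set M : Matrix S S ℚ := fun a b' => ((∑ i, A i a.1 * A i b'.1 : ℤ) : ℚ) with hM
  set Mr : Matrix S S ℝ := fun a b' => ((∑ i, A i a.1 * A i b'.1 : ℤ) : ℝ) with hMr
  set r : S → ℚ := fun a => ((∑ i, A i a.1 * b i : ℤ) : ℚ) with hr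
  -- real injectivity
  have hinjR : ∀ v : S → ℝ, Mr.mulVec v = 0 → v = 0 := by
    intro v hv
    have hsq : ∑ i, (∑ a : S, (A i a.1 : ℝ) * v a) ^ 2 = 0 := by
      have h1 : ∑ i, (∑ a : S, (A i a.1 : ℝ) * v a) ^ 2
          = ∑ a : S, v a * (Mr.mulVec v a) := by
        simp only [Matrix.mulVec, dotProduct, hMr]
        push_cast
        simp only [Finset.mul_sum, Finset.sum_mul, sq]
        rw [Finset.sum_comm]
        apply Finset.sum_congr rfl
        intro a _
        rw [Finset.sum_comm]
        apply Finset.sum_congr rfl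
        intro b' _
        apply Finset.sum_congr rfl
        intro i _
        ring
      rw [h1, hv]
      simp
    have hz : ∀ i, ∑ a : S, (A i a.1 : ℝ) * v a = 0 := by
      intro i
      have := Finset.sum_eq_zero_iff_of_nonneg (fun i _ => sq_nonneg _) |>.1 hsq i (Finset.mem_univ i)
      exact pow_eq_zero_iff (two_ne_zero) |>.1 this
    have := Fintype.linearIndependent_iff.1 hli v ?_
    · funext a; exact this a
    · funext i
      rw [Finset.sum_apply]
      simpa only [Pi.smul_apply, smul_eq_mul, mul_comm, Pi.zero_apply] using hz i
  -- rational injectivity hence surjectivity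
  have hinjQ : Function.Injective (Matrix.mulVecLin M) := by
    rw [injective_iff_map_eq_zero]
    intro q hq
    have hcast : Mr.mulVec (fun a => (q a : ℝ)) = 0 := by
      funext a
      have := congrFun hq a
      simp only [Matrix.mulVecLin_apply] at this
      have h2 : ((M.mulVec q a : ℚ) : ℝ) = Mr.mulVec (fun a => (q a : ℝ)) a := by
        simp only [Matrix.mulVec, dotProduct, hM, hMr]
        push_cast
        rfl
      rw [this] at h2
      simp only [Pi.zero_apply, Rat.cast_zero] at h2
      exact h2.symm
    have := hinjR _ hcast
    funext a
    have h5 := congrFun this a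
    simp only [Pi.zero_apply] at h5 ⊢
    exact_mod_cast h5
  have hsurj : Function.Surjective (Matrix.mulVecLin M) :=
    (LinearMap.injective_iff_surjective).1 hinjQ
  obtain ⟨q0, hq0⟩ := hsurj r
  -- the real restricted vector solves the same system
  have hmem : ∀ j : Fin n, j ∈ Finset.univ.filter (fun j => x j ≠ 0) ↔ x j ≠ 0 := by
    intro j; simp
  have hsubt : ∀ f : Fin n → ℝ, (∀ j, x j = 0 → f j = 0) →
      ∑ a : S, f a.1 = ∑ j, f j := by
    intro f hf
    rw [← Finset.sum_subtype _ hmem f]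
    apply Finset.sum_filter_of_ne
    intro j _ hne
    intro hxj
    exact hne (hf j hxj)
  have hMu : Mr.mulVec (fun a : S => x a.1) = fun a : S => ((r a : ℚ) : ℝ) := by
    funext a
    simp only [Matrix.mulVec, dotProduct, hMr, hr]
    push_cast
    have h1 : ∑ b' : S, (∑ i, (A i a.1 : ℝ) * (A i b'.1 : ℝ)) * x b'.1
        = ∑ i, (A i a.1 : ℝ) * (∑ b' : S, (A i b'.1 : ℝ) * x b'.1) := by
      simp only [Finset.mul_sum, Finset.sum_mul]
      rw [Finset.sum_comm]
      apply Finset.sum_congr rfl; intro b' _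
      apply Finset.sum_congr rfl; intro i _
      ring
    rw [h1]
    apply Finset.sum_congr rfl
    intro i _
    congr 1
    rw [hsubt (fun j => (A i j : ℝ) * x j) (fun j hj => by show (A i j : ℝ) * x j = 0; rw [hj]; ring)]
    exact hx.2 i
  have hMq : Mr.mulVec (fun a : S => ((q0 a : ℚ) : ℝ)) = fun a : S => ((r a : ℚ) : ℝ) := by
    funext a
    have h2 : Mr.mulVec (fun a => ((q0 a : ℚ) : ℝ)) a = ((M.mulVec q0 a : ℚ) : ℝ) := by
      simp only [Matrix.mulVec, dotProduct, hM, hMr]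
      push_cast
      rfl
    rw [h2]
    have := congrFun hq0 a
    simp only [Matrix.mulVecLin_apply] at this
    rw [this]
  have hdiff : (fun a : S => x a.1) = fun a : S => ((q0 a : ℚ) : ℝ) := by
    have h3 : Mr.mulVec ((fun a : S => x a.1) - fun a : S => ((q0 a : ℚ) : ℝ)) = 0 := by
      rw [Matrix.mulVec_sub, hMu, hMq]
      simp
    have := hinjR _ h3
    funext a
    have h4 := congrFun this a
    simp only [Pi.sub_apply, Pi.zero_apply, sub_eq_zero] at h4
    exact h4
  refine ⟨fun j => if h : x j ≠ 0 then q0 ⟨j, h⟩ else 0, fun j => ?_⟩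
  by_cases h : x j ≠ 0
  · show x j = ((if h : x j ≠ 0 then q0 ⟨j, h⟩ else 0 : ℚ) : ℝ)
    rw [dif_pos h]
    exact congrFun hdiff ⟨j, h⟩
  · show x j = ((if h : x j ≠ 0 then q0 ⟨j, h⟩ else 0 : ℚ) : ℝ)
    rw [dif_neg h]
    push_neg at h
    simp [h]


lemma cast_feas {d n : ℕ} (A : Matrix (Fin d) (Fin n) ℤ) (b : Fin d → ℤ) (u : Fin n → ℕ)
    (hu : ∀ i, ∑ j, A i j * (u j : ℤ) = b i) : feas A (fun i => (b i : ℝ)) (fun j => (u j : ℝ)) := by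
  refine ⟨fun j => by positivity, fun i => ?_⟩
  have h1 := hu i
  show ∑ j, (A i j : ℝ) * ((u j : ℕ) : ℝ) = ((b i : ℤ) : ℝ)
  exact_mod_cast congrArg (fun z : ℤ => (z : ℝ)) h1

lemma sub_t {d n : ℕ} (A : Matrix (Fin d) (Fin n) ℤ) (c : Fin n → ℝ) (u : Fin n → ℕ)
    (t : Fin n → ℤ) (ht0 : ∀ i, ∑ j, A i j * t j = 0) (hle : ∀ j, t j ≤ (u j : ℤ)) :
    ∃ u' : Fin n → ℕ, (∀ i, ∑ j, A i j * (u' j : ℤ) = ∑ j, A i j * (u j : ℤ)) ∧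
      ∑ j, c j * (u' j : ℝ) = ∑ j, c j * (u j : ℝ) - ∑ j, c j * (t j : ℝ) := by
  refine ⟨fun j => ((u j : ℤ) - t j).toNat, ?_, ?_⟩
  · intro i
    have hcast : ∀ j, ((((u j : ℤ) - t j).toNat : ℤ)) = (u j : ℤ) - t j := by
      intro j; exact Int.toNat_of_nonneg (by have := hle j; omega)
    calc ∑ j, A i j * ((((u j : ℤ) - t j).toNat : ℤ))
        = ∑ j, (A i j * (u j : ℤ) - A i j * t j) := by
          apply Finset.sum_congr rfl; intro j _; rw [hcast j]; ring
      _ = ∑ j, A i j * (u j : ℤ) - ∑ j, A i j * t j := Finset.sum_sub_distrib _ _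
      _ = ∑ j, A i j * (u j : ℤ) := by rw [ht0 i]; ring
  · have hcast : ∀ j, ((((u j : ℤ) - t j).toNat : ℝ)) = (u j : ℝ) - (t j : ℝ) := by
      intro j
      have h1 : ((((u j : ℤ) - t j).toNat : ℤ)) = (u j : ℤ) - t j :=
        Int.toNat_of_nonneg (by have := hle j; omega)
      exact_mod_cast congrArg (fun z : ℤ => (z : ℝ)) h1
    calc ∑ j, c j * ((((u j : ℤ) - t j).toNat : ℝ))
        = ∑ j, (c j * (u j : ℝ) - c j * (t j : ℝ)) := by
          apply Finset.sum_congr rfl; intro j _; rw [hcast j]; ring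
      _ = _ := Finset.sum_sub_distrib _ _


lemma int_from_rat {d n : ℕ} (A : Matrix (Fin d) (Fin n) ℤ) (b : Fin d → ℤ)
    (q : Fin n → ℚ) (hq : feas A (fun i => (b i : ℝ)) (fun j => (q j : ℝ))) :
    ∃ (N : ℕ) (u : Fin n → ℕ), 0 < N ∧ (∀ i, ∑ j, A i j * (u j : ℤ) = N * b i) ∧
      (∀ j, (u j : ℝ) = N * (q j : ℝ)) := by
  classical
  set N : ℕ := ∏ j, (q j).den with hNdef
  have hN : 0 < N := Finset.prod_pos (fun j _ => (q j).pos)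
  have hqnn : ∀ j, 0 ≤ q j := by
    intro j
    have h0 := hq.1 j
    simp only at h0
    exact_mod_cast h0
  have hz : ∀ j, ∃ z : ℤ, (z : ℚ) = q j * N ∧ 0 ≤ z := by
    intro j
    obtain ⟨m, hm⟩ := Finset.dvd_prod_of_mem (fun j => (q j).den) (Finset.mem_univ j)
    refine ⟨(q j).num * m, ?_, ?_⟩
    · have : (N : ℚ) = ((q j).den : ℚ) * (m : ℚ) := by exact_mod_cast hm
      rw [this]
      push_cast
      rw [← mul_assoc, Rat.mul_den_eq_num]
    · exact mul_nonneg (Rat.num_nonneg.2 (hqnn j)) (Int.ofNat_nonneg m)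
  choose z hz1 hz2 using hz
  have hfq : ∀ i, ∑ j, (A i j : ℚ) * q j = b i := by
    intro i
    have h1 := hq.2 i
    have h2 : ((∑ j, (A i j : ℚ) * q j : ℚ) : ℝ) = ((b i : ℚ) : ℝ) := by
      push_cast
      push_cast at h1
      exact h1
    exact_mod_cast h2
  refine ⟨N, fun j => (z j).toNat, hN, ?_, ?_⟩
  · intro i
    have hcast : ∀ j, (((z j).toNat : ℤ) : ℚ) = q j * N := by
      intro j
      rw [Int.toNat_of_nonneg (hz2 j)]
      exact hz1 j
    have h3 : ((∑ j, A i j * ((z j).toNat : ℤ) : ℤ) : ℚ) = ((N * b i : ℤ) : ℚ) := by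
      push_cast [-Rat.cast_intCast]
      calc ∑ j, (A i j : ℚ) * (((z j).toNat : ℤ) : ℚ)
          = ∑ j, (A i j : ℚ) * (q j * N) := by
            apply Finset.sum_congr rfl; intro j _; rw [hcast j]
        _ = (∑ j, (A i j : ℚ) * q j) * N := by
            rw [Finset.sum_mul]; apply Finset.sum_congr rfl; intro j _; ring
        _ = (N : ℚ) * b i := by rw [hfq i]; ring
    exact_mod_cast h3
  · intro j
    have h1 : (((z j).toNat : ℤ) : ℚ) = q j * N := by
      rw [Int.toNat_of_nonneg (hz2 j)]
      exact hz1 j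
    have h2 : (((z j).toNat : ℕ) : ℝ) = ((q j * N : ℚ) : ℝ) := by
      exact_mod_cast congrArg (fun a : ℚ => (a : ℝ)) h1
    rw [h2]
    push_cast
    ring


lemma exists_min {d n : ℕ} (A : Matrix (Fin d) (Fin n) ℤ) (c : Fin n → ℝ)
    (y : Fin d → ℝ) (hy : ∀ j, ∑ i, y i * (A i j : ℝ) ≤ c j)
    (T : Finset (Fin n → ℤ))
    (hT : ∀ t ∈ T, (∀ i, ∑ j, A i j * t j = 0) ∧ (0 < ∑ j, c j * (t j : ℝ)) ∧ ∀ j, t j ≤ 1)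
    (hTest : ∀ u : Fin n → ℕ, intNonOpt A c u → ∃ t ∈ T, ∀ j, t j ≤ (u j : ℤ))
    (b : Fin d → ℤ) (u0 : Fin n → ℕ) (hu0 : ∀ i, ∑ j, A i j * (u0 j : ℤ) = b i) :
    ∃ us : Fin n → ℕ, (∀ i, ∑ j, A i j * (us j : ℤ) = b i) ∧
      ∀ u : Fin n → ℕ, (∀ i, ∑ j, A i j * (u j : ℤ) = b i) →
        ∑ j, c j * (us j : ℝ) ≤ ∑ j, c j * (u j : ℝ) := by
  classical
  rcases T.eq_empty_or_nonempty with hTe | hTne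
  · refine ⟨u0, hu0, fun u hu => ?_⟩
    by_contra hlt
    push_neg at hlt
    obtain ⟨t, ht, -⟩ := hTest u0 ⟨u, fun i => by rw [hu i, hu0 i], hlt⟩
    rw [hTe] at ht
    exact absurd ht (Finset.notMem_empty t)
  · set SIP : Set ℝ := {v : ℝ | ∃ u : Fin n → ℕ, (∀ i, ∑ j, A i j * (u j : ℤ) = b i) ∧
      v = ∑ j, c j * (u j : ℝ)} with hSIP
    have hne : SIP.Nonempty := ⟨_, u0, hu0, rfl⟩
    have hbdd : BddBelow SIP := by
      refine ⟨∑ i, y i * (b i : ℝ), ?_⟩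
      rintro v ⟨u, hu, rfl⟩
      exact lb_lemma A c y hy _ _ (cast_feas A b u hu)
    set δ : ℝ := T.inf' hTne (fun t => ∑ j, c j * (t j : ℝ)) with hδdef
    have hδpos : 0 < δ := by
      rw [hδdef, Finset.lt_inf'_iff]
      intro t ht
      exact (hT t ht).2.1
    have hδle : ∀ t ∈ T, δ ≤ ∑ j, c j * (t j : ℝ) := fun t ht => Finset.inf'_le _ ht
    obtain ⟨v, hvmem, hvlt⟩ := Real.lt_sInf_add_pos hne hδpos
    obtain ⟨u1, hu1, rfl⟩ := hvmem
    refine ⟨u1, hu1, fun u hu => ?_⟩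
    by_contra hlt
    push_neg at hlt
    obtain ⟨t, htT, htle⟩ := hTest u1 ⟨u, fun i => by rw [hu i, hu1 i], hlt⟩
    obtain ⟨u', hu'f, hu'c⟩ := sub_t A c u1 t (hT t htT).1 htle
    have hmem' : (∑ j, c j * (u' j : ℝ)) ∈ SIP := ⟨u', fun i => by rw [hu'f i, hu1 i], rfl⟩
    have h5 := csInf_le hbdd hmem'
    have h6 := hδle t htT
    rw [hu'c] at h5
    linarith

lemma scaled_opt {d n : ℕ} (A : Matrix (Fin d) (Fin n) ℤ) (c : Fin n → ℝ)
    (T : Finset (Fin n → ℤ))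
    (hT : ∀ t ∈ T, (∀ i, ∑ j, A i j * t j = 0) ∧ (0 < ∑ j, c j * (t j : ℝ)) ∧ ∀ j, t j ≤ 1)
    (hTest : ∀ u : Fin n → ℕ, intNonOpt A c u → ∃ t ∈ T, ∀ j, t j ≤ (u j : ℤ))
    (b : Fin d → ℤ) (us : Fin n → ℕ) (hus : ∀ i, ∑ j, A i j * (us j : ℤ) = b i)
    (hmin : ∀ u : Fin n → ℕ, (∀ i, ∑ j, A i j * (u j : ℤ) = b i) →
      ∑ j, c j * (us j : ℝ) ≤ ∑ j, c j * (u j : ℝ))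
    (N : ℕ) (u : Fin n → ℕ) (hu : ∀ i, ∑ j, A i j * (u j : ℤ) = N * b i) :
    (N : ℝ) * ∑ j, c j * (us j : ℝ) ≤ ∑ j, c j * (u j : ℝ) := by
  by_contra hlt
  push_neg at hlt
  set uN : Fin n → ℕ := fun j => N * us j with huN
  have hfeasN : ∀ i, ∑ j, A i j * (uN j : ℤ) = N * b i := by
    intro i
    calc ∑ j, A i j * ((N * us j : ℕ) : ℤ)
        = (N : ℤ) * ∑ j, A i j * (us j : ℤ) := by
          rw [Finset.mul_sum]; apply Finset.sum_congr rfl; intro j _; push_cast; ring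
      _ = N * b i := by rw [hus i]
  have hcostN : ∑ j, c j * (uN j : ℝ) = (N : ℝ) * ∑ j, c j * (us j : ℝ) := by
    rw [Finset.mul_sum]; apply Finset.sum_congr rfl; intro j _
    show c j * ((N * us j : ℕ) : ℝ) = (N : ℝ) * (c j * (us j : ℝ))
    push_cast; ring
  have hnonopt : intNonOpt A c uN :=
    ⟨u, fun i => by rw [hu i, hfeasN i], by rw [hcostN]; exact hlt⟩
  obtain ⟨t, htT, htle⟩ := hTest uN hnonopt
  have htle' : ∀ j, t j ≤ (us j : ℤ) := by
    intro j
    rcases le_or_gt (t j) 0 with h | h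
    · exact le_trans h (Int.ofNat_nonneg _)
    · have ht1 : t j = 1 := le_antisymm ((hT t htT).2.2 j) h
      have h2 : (1 : ℤ) ≤ ((N * us j : ℕ) : ℤ) := by rw [← ht1]; exact htle j
      have h3 : us j ≠ 0 := by
        intro h0
        rw [h0, Nat.mul_zero] at h2
        simp at h2
      omega
  obtain ⟨u', hu'f, hu'c⟩ := sub_t A c us t (hT t htT).1 htle'
  have h4 := hmin u' (fun i => by rw [hu'f i, hus i])
  have h5 := (hT t htT).2.1
  rw [hu'c] at h4
  linarith

theorem stmt2 {d n : ℕ} (A : Matrix (Fin d) (Fin n) ℤ) (c : Fin n → ℝ)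
    (hQ : ∃ y : Fin d → ℝ, ∀ j, ∑ i, y i * (A i j : ℝ) ≤ c j)
    -- A is a Hilbert basis
    (hHilb : ∀ b : Fin d → ℤ, (∃ x, feas A (fun i => (b i : ℝ)) x) →
      ∃ u : Fin n → ℕ, ∀ i, ∑ j, A i j * (u j : ℤ) = b i)
    -- a finite test-set whose elements have all positive entries equal to 1
    (T : Finset (Fin n → ℤ))
    (hT : ∀ t ∈ T, (∀ i, ∑ j, A i j * t j = 0) ∧ (0 < ∑ j, c j * (t j : ℝ)) ∧ ∀ j, t j ≤ 1)
    (hTest : ∀ u : Fin n → ℕ, intNonOpt A c u → ∃ t ∈ T, ∀ j, t j ≤ (u j : ℤ)) :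
    -- TDI: for every integer b in cone(A) the LP and IP optimal values coincide
    ∀ b : Fin d → ℤ, (∃ x, feas A (fun i => (b i : ℝ)) x) →
      sInf {v : ℝ | ∃ x, feas A (fun i => (b i : ℝ)) x ∧ v = ∑ j, c j * x j} =
      sInf {v : ℝ | ∃ u : Fin n → ℕ, (∀ i, ∑ j, A i j * (u j : ℤ) = b i) ∧
        v = ∑ j, c j * (u j : ℝ)} := by
  intro b hbfeas
  obtain ⟨y, hy⟩ := hQ
  obtain ⟨u0, hu0⟩ := hHilb b hbfeas
  obtain ⟨us, hus, hmin⟩ := exists_min A c y hy T hT hTest b u0 hu0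
  set LP : Set ℝ := {v : ℝ | ∃ x, feas A (fun i => (b i : ℝ)) x ∧ v = ∑ j, c j * x j} with hLP
  set IP : Set ℝ := {v : ℝ | ∃ u : Fin n → ℕ, (∀ i, ∑ j, A i j * (u j : ℤ) = b i) ∧
      v = ∑ j, c j * (u j : ℝ)} with hIP
  have hLPne : LP.Nonempty := by
    obtain ⟨x, hx⟩ := hbfeas
    exact ⟨_, x, hx, rfl⟩
  have hIPne : IP.Nonempty := ⟨_, u0, hu0, rfl⟩
  have hsub : IP ⊆ LP := by
    rintro v ⟨u, hu, rfl⟩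
    exact ⟨fun j => (u j : ℝ), cast_feas A b u hu, rfl⟩
  have hbddLP : BddBelow LP := by
    refine ⟨∑ i, y i * (b i : ℝ), ?_⟩
    rintro v ⟨x, hx, rfl⟩
    exact lb_lemma A c y hy _ x hx
  have hbddIP : BddBelow IP := hbddLP.mono hsub
  apply le_antisymm
  · exact csInf_le_csInf hbddLP hIPne hsub
  · apply le_csInf hLPne
    rintro v ⟨x, hx, rfl⟩
    obtain ⟨x', hx', hcost', hli⟩ := reduce A (fun i => (b i : ℝ)) c y hy n x hx
      (le_trans (Finset.card_filter_le _ _) (by simp))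
    obtain ⟨q, hq⟩ := rational_of_indep A b x' hx' hli
    have hq' : feas A (fun i => (b i : ℝ)) (fun j => (q j : ℝ)) := by
      have : (fun j => ((q j : ℚ) : ℝ)) = x' := funext fun j => (hq j).symm
      rwa [this]
    obtain ⟨N, u, hN, huf, hueq⟩ := int_from_rat A b q hq'
    have h1 := scaled_opt A c T hT hTest b us hus hmin N u huf
    have h2 : ∑ j, c j * (u j : ℝ) = (N : ℝ) * ∑ j, c j * x' j := by
      rw [Finset.mul_sum]
      apply Finset.sum_congr rfl
      intro j _
      rw [hueq j, hq j]
      ring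
    have hNpos : (0 : ℝ) < N := by exact_mod_cast hN
    have h3 : ∑ j, c j * (us j : ℝ) ≤ ∑ j, c j * x' j := by
      rw [h2] at h1
      exact (mul_le_mul_iff_of_pos_left hNpos).1 h1
    exact le_trans (csInf_le hbddIP ⟨us, hus, rfl⟩) (le_trans h3 hcost')
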